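/- Let (X,d) be a compact metric space, μ = Σ_{j=1}^n α_j δ_{y^j} an atomic probability measure (distinct atoms, positive weights), ν a probability measure on X, ψ ∈ ℝⁿ a dual maximizer with Laguerre cells A_j, tie sets Σ_j, and Σ = ∪_j Σ_j. Then for any optimal coupling π ∈ Γ₀(ν,μ), W₂²(ν,μ) = Σ_{j=1}^n ∫_{A_j \ Σ_j} d²(x, y^j) dν(x) + ∫_{Σ × Y} d²(x,y) dπ(x,y). -/

import Mathlib

set_option linter.unusedSectionVars false
set_option linter.unusedVariables false
set_option maxHeartbeats 1000000
open scoped ENNReal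


open MeasureTheory

/-- `π` is a coupling of `ν` and `μ`. -/
def IsCoupling {X : Type*} [MeasurableSpace X]
    (π : Measure (X × X)) (ν μ : Measure X) : Prop :=
  π.map Prod.fst = ν ∧ π.map Prod.snd = μ

/-- `π` is an optimal coupling of `ν` and `μ` for the squared-distance cost. -/
def IsOptimalCoupling {X : Type*} [MetricSpace X] [MeasurableSpace X]
    (π : Measure (X × X)) (ν μ : Measure X) : Prop :=
  IsCoupling π ν μ ∧ ∀ π' : Measure (X × X), IsCoupling π' ν μ →
    (∫ p : X × X, dist p.1 p.2 ^ 2 ∂π) ≤ ∫ p : X × X, dist p.1 p.2 ^ 2 ∂π'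

/-- The squared 2-Wasserstein distance, defined as the minimal transport cost
for the squared-distance cost function. -/
noncomputable def W2sq {X : Type*} [MetricSpace X] [MeasurableSpace X]
    (ν μ : Measure X) : ℝ :=
  sInf {r : ℝ | ∃ π : Measure (X × X), IsCoupling π ν μ ∧
    r = ∫ p : X × X, dist p.1 p.2 ^ 2 ∂π}

/-- The c-transform `ψ^c(x) = min_j ( d²(x, y^j) - ψ^j )`. -/
noncomputable def psiC {X : Type*} [MetricSpace X] {n : ℕ}
    (y : Fin n → X) (ψ : Fin n → ℝ) (x : X) : ℝ :=
  ⨅ j, (dist x (y j) ^ 2 - ψ j)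

/-- The Kantorovich dual functional for semi-discrete optimal transport. -/
noncomputable def dualFun {X : Type*} [MetricSpace X] [MeasurableSpace X] {n : ℕ}
    (y : Fin n → X) (α : Fin n → ℝ) (ν : Measure X) (ψ : Fin n → ℝ) : ℝ :=
  (∫ x, psiC y ψ x ∂ν) + ∑ j, α j * ψ j

/-- The Laguerre cell `A_j`. -/
def Lag {X : Type*} [MetricSpace X] {n : ℕ}
    (y : Fin n → X) (ψ : Fin n → ℝ) (j : Fin n) : Set X :=
  {x | ∀ i, i ≠ j → dist x (y j) ^ 2 - ψ j ≤ dist x (y i) ^ 2 - ψ i}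

/-- The tie set `Σ_j = ∪_{i ≠ j} (A_j ∩ A_i)`. -/
def TieSet {X : Type*} [MetricSpace X] {n : ℕ}
    (y : Fin n → X) (ψ : Fin n → ℝ) (j : Fin n) : Set X :=
  ⋃ i ∈ {i : Fin n | i ≠ j}, (Lag y ψ j ∩ Lag y ψ i)


section Basic
variable {X : Type*} [MetricSpace X] {n : ℕ} (y : Fin n → X) (ψ : Fin n → ℝ)

lemma sd_continuous (j : Fin n) : Continuous (fun x : X => dist x (y j) ^ 2 - ψ j) :=
  ((continuous_id.dist continuous_const).pow 2).sub continuous_const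

lemma lag_isClosed (j : Fin n) : IsClosed (Lag y ψ j) := by
  have : Lag y ψ j = ⋂ i, ⋂ (_ : i ≠ j),
      {x : X | dist x (y j) ^ 2 - ψ j ≤ dist x (y i) ^ 2 - ψ i} := by
    ext x; simp [Lag]
  rw [this]
  exact isClosed_iInter fun i => isClosed_iInter fun _ =>
    isClosed_le (sd_continuous y ψ j) (sd_continuous y ψ i)

variable [MeasurableSpace X] [BorelSpace X]

lemma lag_meas (j : Fin n) : MeasurableSet (Lag y ψ j) :=
  (lag_isClosed y ψ j).measurableSet

lemma tie_meas (j : Fin n) : MeasurableSet (TieSet y ψ j) := by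
  refine MeasurableSet.biUnion (Set.to_countable _) fun i _ =>
    (lag_meas y ψ j).inter (lag_meas y ψ i)

lemma exists_lag (hn : 0 < n) (x : X) : ∃ j, x ∈ Lag y ψ j := by
  haveI : Nonempty (Fin n) := Fin.pos_iff_nonempty.mp hn
  obtain ⟨j, -, hj⟩ := Finset.exists_min_image Finset.univ
    (fun j => dist x (y j) ^ 2 - ψ j) ⟨Classical.arbitrary _, Finset.mem_univ _⟩
  exact ⟨j, fun i _ => hj i (Finset.mem_univ i)⟩

lemma psiC_le (hn : 0 < n) (x : X) (i : Fin n) :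
    psiC y ψ x ≤ dist x (y i) ^ 2 - ψ i := by
  haveI : Nonempty (Fin n) := Fin.pos_iff_nonempty.mp hn
  exact ciInf_le (Set.Finite.bddBelow (Set.finite_range _)) i

lemma psiC_eq (hn : 0 < n) (x : X) (j : Fin n) (hx : x ∈ Lag y ψ j) :
    psiC y ψ x = dist x (y j) ^ 2 - ψ j := by
  haveI : Nonempty (Fin n) := Fin.pos_iff_nonempty.mp hn
  refine le_antisymm (psiC_le y ψ hn x j) (le_ciInf fun i => ?_)
  by_cases h : i = j
  · subst h; rfl
  · exact hx i h

lemma mem_lag_of_le (hn : 0 < n) (x : X) (j : Fin n)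
    (h : dist x (y j) ^ 2 - ψ j ≤ psiC y ψ x) : x ∈ Lag y ψ j :=
  fun i _ => h.trans (psiC_le y ψ hn x i)

lemma psiC_cont (hn : 0 < n) : Continuous (psiC y ψ) := by
  haveI : Nonempty (Fin n) := Fin.pos_iff_nonempty.mp hn
  have : psiC y ψ = fun x => Finset.univ.inf' Finset.univ_nonempty
      (fun j => dist x (y j) ^ 2 - ψ j) := by
    funext x; rw [Finset.inf'_univ_eq_ciInf]; rfl
  rw [this]
  have := Continuous.finset_inf' (f := fun (j : Fin n) (x : X) => dist x (y j) ^ 2 - ψ j)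
    (s := Finset.univ) Finset.univ_nonempty (fun j _ => sd_continuous y ψ j)
  convert this using 1
  funext x
  exact (Finset.inf'_apply Finset.univ_nonempty (fun (j : Fin n) (x : X) => dist x (y j) ^ 2 - ψ j) x).symm

end Basic

section Cells
open Classical
variable {X : Type*} [MetricSpace X] [MeasurableSpace X] [BorelSpace X]
  {n : ℕ} (y : Fin n → X) (ψ : Fin n → ℝ)

/-- The cell of points whose Laguerre-membership pattern is `σ`. -/
def Cell (σ : Fin n → Bool) : Set X := {x | ∀ j, x ∈ Lag y ψ j ↔ σ j = true}

lemma cell_meas (σ : Fin n → Bool) : MeasurableSet (Cell y ψ σ) := by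
  have : Cell y ψ σ = ⋂ j, (if σ j = true then Lag y ψ j else (Lag y ψ j)ᶜ) := by
    ext x
    simp only [Cell, Set.mem_setOf_eq, Set.mem_iInter]
    refine ⟨fun h j => ?_, fun h j => ?_⟩
    · by_cases hσ : σ j = true <;> simp [hσ, (h j)] <;> simp [hσ] at h ⊢ <;>
        exact fun hx => by simpa [hσ] using (h j).mp hx
    · have := h j
      by_cases hσ : σ j = true <;> simp [hσ] at this ⊢ <;> tauto
  rw [this]
  exact MeasurableSet.iInter fun j => by
    by_cases hσ : σ j = true <;> simp [hσ, lag_meas y ψ j, (lag_meas y ψ j).compl]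

lemma cell_disjoint {σ τ : Fin n → Bool} (h : σ ≠ τ) :
    Cell y ψ σ ∩ Cell y ψ τ = ∅ := by
  ext x
  simp only [Set.mem_inter_iff, Set.mem_empty_iff_false, iff_false]
  rintro ⟨hσ, hτ⟩
  exact h (funext fun j => by
    have h1 := hσ j; have h2 := hτ j
    rcases Bool.eq_false_or_eq_true (σ j) with h3 | h3 <;>
      rcases Bool.eq_false_or_eq_true (τ j) with h4 | h4 <;> simp_all)

/-- The membership pattern of a point. -/
noncomputable def pat (x : X) : Fin n → Bool := fun j => decide (x ∈ Lag y ψ j)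

lemma mem_cell_pat (x : X) : x ∈ Cell y ψ (pat y ψ x) := fun j => by simp [pat]

lemma cell_subset_lag {σ : Fin n → Bool} {j : Fin n} (hj : σ j = true) :
    Cell y ψ σ ⊆ Lag y ψ j := fun x hx => (hx j).mpr hj

lemma cell_empty_of_none (hn : 0 < n) {σ : Fin n → Bool} (h : ∀ j, σ j = false) :
    Cell y ψ σ = ∅ := by
  ext x
  simp only [Set.mem_empty_iff_false, iff_false]
  intro hx
  obtain ⟨j, hj⟩ := exists_lag y ψ hn x
  have := (hx j).mp hj
  simp [h j] at this

lemma sum_restrict_cell (ν : Measure X) :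
    (∑ σ : Fin n → Bool, ν.restrict (Cell y ψ σ)) = ν := by
  ext s hs
  rw [Measure.coe_finset_sum, Finset.sum_apply]
  simp only [Measure.restrict_apply hs]
  rw [← measure_biUnion_finset _ fun σ _ => hs.inter (cell_meas y ψ σ)]
  · congr 1
    ext x
    simp only [Set.mem_iUnion, Set.mem_inter_iff]
    constructor
    · rintro ⟨σ, -, hx, -⟩; exact hx
    · intro hx; exact ⟨pat y ψ x, Finset.mem_univ _, hx, mem_cell_pat y ψ x⟩
  · intro σ _ τ _ hστ
    simp only [Function.onFun, Set.disjoint_left]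
    rintro x ⟨-, hx1⟩ ⟨-, hx2⟩
    have := cell_disjoint y ψ hστ (X := X)
    exact absurd (Set.mem_inter hx1 hx2) (by rw [this]; exact Set.notMem_empty x)

end Cells

section StepA
open Classical
variable {X : Type*} [MetricSpace X] [CompactSpace X] [MeasurableSpace X] [BorelSpace X]
  {n : ℕ} (y : Fin n → X) (ψ : Fin n → ℝ)

/-- max of `v` over the indices selected by pattern `σ` (0 if none). -/
noncomputable def mv (v : Fin n → ℝ) (σ : Fin n → Bool) : ℝ :=
  if h : (Finset.univ.filter fun j => σ j = true).Nonempty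
  then Finset.sup' _ h v else 0

/-- `gv v x = max { v j : x ∈ Lag j }`, written as a sum of indicators over cells. -/
noncomputable def gv (v : Fin n → ℝ) (x : X) : ℝ :=
  ∑ σ : Fin n → Bool, (Cell y ψ σ).indicator (fun _ => mv v σ) x

lemma pat_unique {x : X} {σ : Fin n → Bool} (hx : x ∈ Cell y ψ σ) : σ = pat y ψ x := by
  funext j
  have := hx j
  by_cases h : x ∈ Lag y ψ j
  · simp [pat, h, this.mpr, (this.mp h)]
  · have : σ j = false := by
      rcases Bool.eq_false_or_eq_true (σ j) with h1 | h1
      · exact absurd (this.mpr h1) h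
      · exact h1
    simp [pat, h, this]

lemma gv_eq (v : Fin n → ℝ) (x : X) : gv y ψ v x = mv v (pat y ψ x) := by
  rw [gv, Finset.sum_eq_single (pat y ψ x)]
  · simp [Set.indicator_of_mem (mem_cell_pat y ψ x)]
  · intro σ _ hσ
    refine Set.indicator_of_notMem (fun hx => hσ (pat_unique y ψ hx)) _
  · simp

lemma pat_filter_nonempty (hn : 0 < n) (x : X) :
    (Finset.univ.filter fun j => pat y ψ x j = true).Nonempty := by
  obtain ⟨j, hj⟩ := exists_lag y ψ hn x
  exact ⟨j, by simp [pat, hj]⟩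

lemma exists_mv_pat (hn : 0 < n) (v : Fin n → ℝ) (x : X) :
    ∃ j, x ∈ Lag y ψ j ∧ mv v (pat y ψ x) = v j ∧ ∀ i, x ∈ Lag y ψ i → v i ≤ v j := by
  have hne := pat_filter_nonempty y ψ hn x
  obtain ⟨j, hj, hj2⟩ := Finset.exists_mem_eq_sup' hne v
  simp only [Finset.mem_filter, pat, decide_eq_true_eq] at hj
  refine ⟨j, hj.2, by rw [mv, dif_pos hne, hj2], fun i hi => ?_⟩
  rw [← hj2]
  exact Finset.le_sup' v (by simp [pat, hi])

lemma abs_mv_le (hn : 0 < n) (v : Fin n → ℝ) (x : X) :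
    |mv v (pat y ψ x)| ≤ ∑ j, |v j| := by
  obtain ⟨j, -, hj, -⟩ := exists_mv_pat y ψ hn v x
  rw [hj]
  exact Finset.single_le_sum (f := fun j => |v j|) (fun i _ => abs_nonneg _) (Finset.mem_univ j)

lemma gv_meas (v : Fin n → ℝ) : Measurable (gv y ψ v) :=
  Finset.measurable_sum _ fun σ _ =>
    (measurable_const.indicator (cell_meas y ψ σ))

lemma integral_gv (v : Fin n → ℝ) (ν : Measure X) [IsFiniteMeasure ν] :
    ∫ x, gv y ψ v x ∂ν = ∑ σ : Fin n → Bool, mv v σ * (ν (Cell y ψ σ)).toReal := by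
  simp only [gv]
  rw [integral_finset_sum]
  · refine Finset.sum_congr rfl fun σ _ => ?_
    rw [integral_indicator (cell_meas y ψ σ), setIntegral_const, smul_eq_mul, mul_comm, measureReal_def]
  · intro σ _
    exact (integrable_const _).indicator (cell_meas y ψ σ)

/-- Key expansion: for small `t > 0`, `ψᶜ` w.r.t. `ψ + t v` equals `ψᶜ - t·max_{adm} v`. -/
lemma psiC_perturb (hn : 0 < n) (v : Fin n → ℝ) (x : X) :
    ∃ t0 > 0, ∀ t : ℝ, 0 < t → t ≤ t0 →
      psiC y (ψ + t • v) x = psiC y ψ x - t * mv v (pat y ψ x) := by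
  haveI : Nonempty (Fin n) := Fin.pos_iff_nonempty.mp hn
  set M : ℝ := ∑ j, |v j| with hM
  have hMnn : 0 ≤ M := Finset.sum_nonneg fun j _ => abs_nonneg _
  have hvM : ∀ j, |v j| ≤ M := fun j =>
    Finset.single_le_sum (f := fun j => |v j|) (fun i _ => abs_nonneg _) (Finset.mem_univ j)
  obtain ⟨j₀, hj₀mem, hj₀eq, hj₀max⟩ := exists_mv_pat y ψ hn v x
  -- δ : positive gap for inadmissible indices
  set B : Finset (Fin n) := Finset.univ.filter fun j => x ∉ Lag y ψ j with hB
  set m := mv v (pat y ψ x) with hmv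
  have hmabs : |m| ≤ M := abs_mv_le y ψ hn v x
  by_cases hBne : B.Nonempty
  · obtain ⟨i₁, hi₁, hi₁eq⟩ := Finset.exists_mem_eq_inf' hBne
      (fun j => dist x (y j) ^ 2 - ψ j - psiC y ψ x)
    set δ := dist x (y i₁) ^ 2 - ψ i₁ - psiC y ψ x with hδ
    have hδpos : 0 < δ := by
      have hle := psiC_le y ψ hn x i₁
      rcases lt_or_eq_of_le hle with h | h
      · simpa [hδ] using h
      · exfalso
        have : x ∈ Lag y ψ i₁ := mem_lag_of_le y ψ hn x i₁ (le_of_eq h.symm)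
        simp only [hB, Finset.mem_filter] at hi₁
        exact hi₁.2 this
    refine ⟨δ / (2 * M + 1), div_pos hδpos (by linarith), fun t ht ht0 => ?_⟩
    have key : ∀ j, psiC y ψ x - t * m ≤ dist x (y j) ^ 2 - (ψ + t • v) j := by
      intro j
      simp only [Pi.add_apply, Pi.smul_apply, smul_eq_mul]
      by_cases hadm : x ∈ Lag y ψ j
      · have : psiC y ψ x = dist x (y j) ^ 2 - ψ j := psiC_eq y ψ hn x j hadm
        have hvj : v j ≤ m := hj₀eq ▸ hj₀max j hadm
        nlinarith
      · have hjB : j ∈ B := by simp [hB, hadm]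
        have hgap : δ ≤ dist x (y j) ^ 2 - ψ j - psiC y ψ x := hi₁eq ▸ Finset.inf'_le _ hjB
        have h1 : t * (v j - m) ≤ t * (2 * M + 1) := by
          refine mul_le_mul_of_nonneg_left ?_ ht.le
          obtain ⟨h2a, h2b⟩ := abs_le.mp (hvM j)
          obtain ⟨h3a, h3b⟩ := abs_le.mp hmabs
          linarith
        have h2 : t * (2 * M + 1) ≤ δ := by
          rw [← le_div_iff₀ (by linarith : (0:ℝ) < 2 * M + 1)]
          exact ht0
        linarith
    have keyeq : dist x (y j₀) ^ 2 - (ψ + t • v) j₀ = psiC y ψ x - t * m := by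
      simp only [Pi.add_apply, Pi.smul_apply, smul_eq_mul]
      have : psiC y ψ x = dist x (y j₀) ^ 2 - ψ j₀ := psiC_eq y ψ hn x j₀ hj₀mem
      rw [← hj₀eq] at *
      linarith
    refine le_antisymm ?_ (le_ciInf key)
    calc psiC y (ψ + t • v) x ≤ dist x (y j₀) ^ 2 - (ψ + t • v) j₀ :=
          psiC_le y (ψ + t • v) hn x j₀
      _ = psiC y ψ x - t * m := keyeq
  · -- all indices admissible
    refine ⟨1, one_pos, fun t ht ht0 => ?_⟩
    have key : ∀ j, psiC y ψ x - t * m ≤ dist x (y j) ^ 2 - (ψ + t • v) j := by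
      intro j
      simp only [Pi.add_apply, Pi.smul_apply, smul_eq_mul]
      have hadm : x ∈ Lag y ψ j := by
        by_contra h
        exact hBne ⟨j, by simp [hB, h]⟩
      have : psiC y ψ x = dist x (y j) ^ 2 - ψ j := psiC_eq y ψ hn x j hadm
      have hvj : v j ≤ m := hj₀eq ▸ hj₀max j hadm
      nlinarith
    have keyeq : dist x (y j₀) ^ 2 - (ψ + t • v) j₀ = psiC y ψ x - t * m := by
      simp only [Pi.add_apply, Pi.smul_apply, smul_eq_mul]
      have : psiC y ψ x = dist x (y j₀) ^ 2 - ψ j₀ := psiC_eq y ψ hn x j₀ hj₀mem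
      rw [← hj₀eq] at *
      linarith
    refine le_antisymm ?_ (le_ciInf key)
    calc psiC y (ψ + t • v) x ≤ dist x (y j₀) ^ 2 - (ψ + t • v) j₀ :=
          psiC_le y (ψ + t • v) hn x j₀
      _ = psiC y ψ x - t * m := keyeq

end StepA

section StepA2
open Classical Filter
variable {X : Type*} [MetricSpace X] [CompactSpace X] [MeasurableSpace X] [BorelSpace X]
  {n : ℕ} (y : Fin n → X) (ψ : Fin n → ℝ)

lemma psiC_integrable (hn : 0 < n) (ν : Measure X) [IsFiniteMeasure ν] :
    Integrable (psiC y ψ) ν :=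
  (psiC_cont y ψ hn).integrable_of_hasCompactSupport (HasCompactSupport.of_compactSpace _)

lemma psiC_diff_bound (hn : 0 < n) (v : Fin n → ℝ) {t : ℝ} (ht : 0 < t) (x : X) :
    |psiC y ψ x - psiC y (ψ + t • v) x| ≤ t * ∑ j, |v j| := by
  set M : ℝ := ∑ j, |v j| with hM
  have hvM : ∀ j, |v j| ≤ M := fun j =>
    Finset.single_le_sum (f := fun j => |v j|) (fun i _ => abs_nonneg _) (Finset.mem_univ j)
  obtain ⟨j₁, hj₁⟩ := exists_lag y (ψ + t • v) hn x
  obtain ⟨j₂, hj₂⟩ := exists_lag y ψ hn x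
  have e1 : psiC y (ψ + t • v) x = dist x (y j₁) ^ 2 - ψ j₁ - t * v j₁ := by
    rw [psiC_eq y (ψ + t • v) hn x j₁ hj₁]
    simp only [Pi.add_apply, Pi.smul_apply, smul_eq_mul]; ring
  have e2 : psiC y ψ x = dist x (y j₂) ^ 2 - ψ j₂ := psiC_eq y ψ hn x j₂ hj₂
  have u1 : psiC y ψ x ≤ dist x (y j₁) ^ 2 - ψ j₁ := psiC_le y ψ hn x j₁
  have u2 : psiC y (ψ + t • v) x ≤ dist x (y j₂) ^ 2 - ψ j₂ - t * v j₂ := by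
    have := psiC_le y (ψ + t • v) hn x j₂
    simp only [Pi.add_apply, Pi.smul_apply, smul_eq_mul] at this
    linarith
  rw [abs_le]
  obtain ⟨ha1, hb1⟩ := abs_le.mp (hvM j₁)
  obtain ⟨ha2, hb2⟩ := abs_le.mp (hvM j₂)
  constructor
  · nlinarith
  · nlinarith

lemma stepA (hn : 0 < n) (ν : Measure X) [IsProbabilityMeasure ν] (α : Fin n → ℝ)
    (hmax : ∀ φ : Fin n → ℝ, dualFun y α ν φ ≤ dualFun y α ν ψ) (v : Fin n → ℝ) :
    ∑ j, α j * v j ≤ ∫ x, gv y ψ v x ∂ν := by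
  set M : ℝ := ∑ j, |v j| with hM
  set t : ℕ → ℝ := fun k => 1 / (k + 1) with hts
  have ht_pos : ∀ k, 0 < t k := fun k => by positivity
  have ht_to0 : Tendsto t atTop (nhds 0) := tendsto_one_div_add_atTop_nhds_zero_nat
  set F : ℕ → X → ℝ :=
    fun k x => (psiC y ψ x - psiC y (ψ + t k • v) x) / t k with hF
  have hFcont : ∀ k, Continuous (F k) :=
    fun k => ((psiC_cont y ψ hn).sub (psiC_cont y (ψ + t k • v) hn)).div_const _
  have htendsto : Tendsto (fun k => ∫ x, F k x ∂ν) atTop (nhds (∫ x, gv y ψ v x ∂ν)) := by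
    refine tendsto_integral_of_dominated_convergence (fun _ => M)
      (fun k => (hFcont k).aestronglyMeasurable)
      (integrable_const M) (fun k => ?_) ?_
    · refine Filter.Eventually.of_forall fun x => ?_
      have := psiC_diff_bound y ψ hn v (ht_pos k) x
      rw [Real.norm_eq_abs, hF, abs_div, abs_of_pos (ht_pos k)]
      rw [div_le_iff₀ (ht_pos k)]
      linarith [this]
    · refine Filter.Eventually.of_forall fun x => ?_
      obtain ⟨t0, ht0pos, heq⟩ := psiC_perturb y ψ hn v x
      have hev : ∀ᶠ k in atTop, F k x = gv y ψ v x := by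
        filter_upwards [ht_to0.eventually (gt_mem_nhds ht0pos)] with k hk
        show (psiC y ψ x - psiC y (ψ + t k • v) x) / t k = gv y ψ v x
        rw [heq (t k) (ht_pos k) hk.le, gv_eq]
        rw [sub_sub_cancel, mul_div_cancel_left₀ _ (ht_pos k).ne']
      exact Tendsto.congr' (hev.mono fun k h => h.symm) tendsto_const_nhds
  refine ge_of_tendsto' htendsto fun k => ?_
  have hd := hmax (ψ + t k • v)
  simp only [dualFun] at hd
  have hsum : (∑ j, α j * (ψ + t k • v) j) = (∑ j, α j * ψ j) + t k * ∑ j, α j * v j := by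
    rw [Finset.mul_sum, ← Finset.sum_add_distrib]
    refine Finset.sum_congr rfl fun j _ => ?_
    simp only [Pi.add_apply, Pi.smul_apply, smul_eq_mul]
    ring
  rw [hsum] at hd
  have hint : ∫ x, F k x ∂ν =
      ((∫ x, psiC y ψ x ∂ν) - ∫ x, psiC y (ψ + t k • v) x ∂ν) / t k := by
    rw [hF]
    simp only
    rw [integral_div, integral_sub (psiC_integrable y ψ hn ν)
      (psiC_integrable y (ψ + t k • v) hn ν)]
  rw [hint, le_div_iff₀ (ht_pos k)]
  linarith

end StepA2

section StepB
open Classical Filter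
variable {X : Type*} [MetricSpace X] [CompactSpace X] [MeasurableSpace X] [BorelSpace X]
  {n : ℕ} (y : Fin n → X) (ψ : Fin n → ℝ)

lemma stepB (hn : 0 < n) (ν : Measure X) [IsProbabilityMeasure ν] (α : Fin n → ℝ)
    (hmax : ∀ φ : Fin n → ℝ, dualFun y α ν φ ≤ dualFun y α ν ψ) :
    ∃ Q : (Fin n → Bool) → Fin n → ℝ,
      (∀ σ j, 0 ≤ Q σ j) ∧
      (∀ σ, ∑ j, Q σ j = (ν (Cell y ψ σ)).toReal) ∧
      (∀ σ j, σ j = false → Q σ j = 0) ∧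
      (∀ j, ∑ σ, Q σ j = α j) := by
  set w : (Fin n → Bool) → ℝ := fun σ => (ν (Cell y ψ σ)).toReal with hw
  have hwnn : ∀ σ, 0 ≤ w σ := fun σ => ENNReal.toReal_nonneg
  set K : Set ((Fin n → Bool) → Fin n → ℝ) := {Q | (∀ σ j, 0 ≤ Q σ j) ∧ (∀ σ, ∑ j, Q σ j = w σ) ∧
      (∀ σ j, σ j = false → Q σ j = 0)} with hK
  set T : ((Fin n → Bool) → Fin n → ℝ) →ₗ[ℝ] (Fin n → ℝ) :=
    { toFun := fun Q => fun j => ∑ σ, Q σ j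
      map_add' := fun a b => by
        funext j; simp only [Pi.add_apply]; rw [Finset.sum_add_distrib]
      map_smul' := fun c a => by
        funext j; simp only [Pi.smul_apply, smul_eq_mul, RingHom.id_apply]
        rw [Finset.mul_sum] } with hT
  -- the greedy allocation associated to a direction v
  have greedy : ∀ v : Fin n → ℝ, ∃ Q ∈ K, (∑ σ, w σ * mv v σ) = ∑ j, (T Q) j * v j := by
    intro v
    have hsel : ∀ σ : Fin n → Bool, ∃ q : Fin n → ℝ, (∀ j, 0 ≤ q j) ∧ (∑ j, q j = w σ) ∧
        (∀ j, σ j = false → q j = 0) ∧ (∑ j, q j * v j = w σ * mv v σ) := by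
      intro σ
      by_cases h : (Finset.univ.filter fun j => σ j = true).Nonempty
      · obtain ⟨jσ, hjσ, hjeq⟩ := Finset.exists_mem_eq_sup' h v
        refine ⟨fun j => if j = jσ then w σ else 0, fun j => ?_, ?_, fun j hj => ?_, ?_⟩
        · simp only; split <;> simp [hwnn σ]
        · simp [Finset.sum_ite_eq']
        · rcases eq_or_ne j jσ with rfl | hne
          · simp only [Finset.mem_filter] at hjσ; rw [hjσ.2] at hj; exact absurd hj (by simp)
          · simp [hne]
        · rw [Finset.sum_congr rfl (fun j _ => show (if j = jσ then w σ else 0) * v j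
            = if j = jσ then w σ * v jσ else 0 by split <;> simp_all)]
          rw [Finset.sum_ite_eq' Finset.univ jσ fun _ => w σ * v jσ]
          simp [mv, dif_pos h, ← hjeq]
      · have hz : w σ = 0 := by
          have : Cell y ψ σ = ∅ := cell_empty_of_none y ψ hn (fun j => by
            rcases Bool.eq_false_or_eq_true (σ j) with h1 | h1
            · exact absurd ⟨j, by simp [h1]⟩ h
            · exact h1)
          simp [hw, this]
        exact ⟨0, by simp, by simp [hz], by simp, by simp [hz]⟩
    choose q hq1 hq2 hq3 hq4 using hsel
    refine ⟨fun σ => q σ, ⟨fun σ j => hq1 σ j, fun σ => hq2 σ, fun σ j => hq3 σ j⟩, ?_⟩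
    have : ∀ j, (T (fun σ => q σ)) j = ∑ σ, q σ j := fun j => rfl
    calc (∑ σ, w σ * mv v σ) = ∑ σ, ∑ j, q σ j * v j := by
          refine Finset.sum_congr rfl fun σ _ => (hq4 σ).symm
      _ = ∑ j, (∑ σ, q σ j) * v j := by
          rw [Finset.sum_comm]
          exact Finset.sum_congr rfl fun j _ => by rw [Finset.sum_mul]
      _ = ∑ j, (T (fun σ => q σ)) j * v j := rfl
  -- K is compact and convex, so T '' K is closed and convex
  have hKconv : Convex ℝ K := by
    rintro a ha b hb s u hs hu hsu
    refine ⟨fun σ j => ?_, fun σ => ?_, fun σ j hj => ?_⟩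
    · have h1 := ha.1 σ j; have h2 := hb.1 σ j
      simp only [Pi.add_apply, Pi.smul_apply, smul_eq_mul]
      positivity
    · simp only [Pi.add_apply, Pi.smul_apply, smul_eq_mul]
      rw [Finset.sum_add_distrib, ← Finset.mul_sum, ← Finset.mul_sum, ha.2.1 σ, hb.2.1 σ,
        ← add_mul, hsu, one_mul]
    · simp [Pi.add_apply, Pi.smul_apply, ha.2.2 σ j hj, hb.2.2 σ j hj]
  have hKclosed : IsClosed K := by
    have hrepr : K = (⋂ σ, ⋂ j, {Q : (Fin n → Bool) → Fin n → ℝ | 0 ≤ Q σ j}) ∩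
        ((⋂ σ, {Q : (Fin n → Bool) → Fin n → ℝ | ∑ j, Q σ j = w σ}) ∩
         (⋂ σ, ⋂ j, {Q : (Fin n → Bool) → Fin n → ℝ | σ j = false → Q σ j = 0})) := by
      ext Q
      simp only [hK, Set.mem_setOf_eq, Set.mem_inter_iff, Set.mem_iInter]
    rw [hrepr]
    have heval : ∀ (σ : Fin n → Bool) (j : Fin n), Continuous (fun Q : (Fin n → Bool) → Fin n → ℝ => Q σ j) :=
      fun σ j => (continuous_apply j).comp (continuous_apply σ)
    refine IsClosed.inter (isClosed_iInter fun σ => isClosed_iInter fun j =>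
        isClosed_le continuous_const (heval σ j)) (IsClosed.inter ?_ ?_)
    · exact isClosed_iInter fun σ =>
        isClosed_eq (by exact continuous_finset_sum _ fun j _ => heval σ j) continuous_const
    · refine isClosed_iInter fun σ => isClosed_iInter fun j => ?_
      by_cases hσ : σ j = false
      · have : {Q : (Fin n → Bool) → Fin n → ℝ | σ j = false → Q σ j = 0} = {Q : (Fin n → Bool) → Fin n → ℝ | Q σ j = 0} := by
          ext Q; simp [hσ]
        rw [this]
        exact isClosed_eq (heval σ j) continuous_const
      · have : {Q : (Fin n → Bool) → Fin n → ℝ | σ j = false → Q σ j = 0} = Set.univ := by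
          ext Q; simp [hσ]
        rw [this]; exact isClosed_univ
  have hKbdd : Bornology.IsBounded K := by
    set R : ℝ := ∑ σ, w σ with hR
    have hRnn : 0 ≤ R := Finset.sum_nonneg fun σ _ => hwnn σ
    refine (Metric.isBounded_iff_subset_closedBall 0).mpr ⟨R, fun Q hQ => ?_⟩
    simp only [Metric.mem_closedBall, dist_zero_right]
    rw [pi_norm_le_iff_of_nonneg hRnn]
    intro σ
    rw [pi_norm_le_iff_of_nonneg hRnn]
    intro j
    rw [Real.norm_eq_abs, abs_le]
    constructor
    · have := hQ.1 σ j; linarith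
    · calc Q σ j ≤ ∑ i, Q σ i :=
            Finset.single_le_sum (fun i _ => hQ.1 σ i) (Finset.mem_univ j)
        _ = w σ := hQ.2.1 σ
        _ ≤ R := Finset.single_le_sum (f := w) (fun σ _ => hwnn σ) (Finset.mem_univ σ)
  have hKcomp : IsCompact K := Metric.isCompact_of_isClosed_isBounded hKclosed hKbdd
  have hTcont : Continuous T := T.continuous_of_finiteDimensional
  have himgcomp : IsCompact (T '' K) := hKcomp.image hTcont
  have himgconv : Convex ℝ (T '' K) := hKconv.linear_image T
  -- α belongs to the image, by separation
  have hmem : α ∈ T '' K := by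
    by_contra hα
    obtain ⟨f, u, hfu, hfα⟩ :=
      geometric_hahn_banach_closed_point himgconv himgcomp.isClosed hα
    set v : Fin n → ℝ := fun j => f (fun i => if j = i then (1:ℝ) else 0) with hv
    have hf : ∀ z : Fin n → ℝ, f z = ∑ j, z j * v j := by
      intro z
      conv_lhs => rw [pi_eq_sum_univ z]
      rw [map_sum]
      exact Finset.sum_congr rfl fun j _ => by rw [_root_.map_smul, smul_eq_mul]
    obtain ⟨Q, hQK, hQeq⟩ := greedy v
    have h1 : ∑ j, α j * v j ≤ ∫ x, gv y ψ v x ∂ν := stepA y ψ hn ν α hmax v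
    have h2 : ∫ x, gv y ψ v x ∂ν = ∑ σ, w σ * mv v σ := by
      rw [integral_gv]
      exact Finset.sum_congr rfl fun σ _ => mul_comm _ _
    have h3 : f (T Q) < u := hfu _ ⟨Q, hQK, rfl⟩
    rw [hf (T Q), ← hQeq] at h3
    rw [hf α] at hfα
    linarith
  obtain ⟨Q, hQK, hTQ⟩ := hmem
  exact ⟨Q, hQK.1, hQK.2.1, hQK.2.2, fun j => congrFun hTQ j⟩

end StepB

section StepC
open Classical
variable {X : Type*} [MetricSpace X] [CompactSpace X] [MeasurableSpace X] [BorelSpace X]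
  {n : ℕ} (y : Fin n → X) (ψ : Fin n → ℝ)

lemma map_finset_sum_meas {Z : Type*} [MeasurableSpace Z] {ι : Type*} (s : Finset ι)
    (μ : ι → Measure X) {f : X → Z} (hf : Measurable f) :
    (∑ i ∈ s, μ i).map f = ∑ i ∈ s, (μ i).map f := by
  induction s using Finset.cons_induction with
  | empty => simp [Measure.map_zero]
  | cons i s hi ih =>
    rw [Finset.sum_cons, Finset.sum_cons, Measure.map_add _ _ hf, ih]

lemma cost_integrable (π : Measure (X × X)) [IsFiniteMeasure π] :
    Integrable (fun p : X × X => dist p.1 p.2 ^ 2) π :=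
  (((continuous_fst.dist continuous_snd).pow 2)).integrable_of_hasCompactSupport
    (HasCompactSupport.of_compactSpace _)

lemma stepC (hn : 0 < n) (ν : Measure X) [IsProbabilityMeasure ν]
    (α : Fin n → ℝ) (hα : ∀ j, 0 < α j)
    (μ : Measure X) (hμ : μ = ∑ j, ENNReal.ofReal (α j) • Measure.dirac (y j))
    (hmax : ∀ φ : Fin n → ℝ, dualFun y α ν φ ≤ dualFun y α ν ψ) :
    ∃ π₀ : Measure (X × X), IsCoupling π₀ ν μ ∧
      ∫ p : X × X, dist p.1 p.2 ^ 2 ∂π₀ = dualFun y α ν ψ := by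
  obtain ⟨Q, hQnn, hQrow, hQsupp, hQcol⟩ := stepB y ψ hn ν α hmax
  set c : (Fin n → Bool) → Fin n → ℝ≥0∞ :=
    fun σ j => ENNReal.ofReal (Q σ j) / ν (Cell y ψ σ) with hc
  set ρ : Fin n → Measure X :=
    fun j => ∑ σ, (c σ j) • ν.restrict (Cell y ψ σ) with hρ
  have hfin : ∀ σ, ν (Cell y ψ σ) ≠ ∞ := fun σ => measure_ne_top ν _
  have hQzero : ∀ σ j, ν (Cell y ψ σ) = 0 → Q σ j = 0 := by
    intro σ j h0
    have h1 : Q σ j ≤ ∑ i, Q σ i :=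
      Finset.single_le_sum (fun i _ => hQnn σ i) (Finset.mem_univ j)
    rw [hQrow σ] at h1
    simp only [h0, ENNReal.toReal_zero] at h1
    exact le_antisymm h1 (hQnn σ j)
  -- total masses
  have hmass : ∀ j, ρ j Set.univ = ENNReal.ofReal (α j) := by
    intro j
    rw [hρ]
    simp only [Measure.coe_finset_sum, Finset.sum_apply, Measure.smul_apply,
      Measure.restrict_apply MeasurableSet.univ, Set.univ_inter, smul_eq_mul]
    have : ∀ σ, c σ j * ν (Cell y ψ σ) = ENNReal.ofReal (Q σ j) := by
      intro σ
      by_cases h0 : ν (Cell y ψ σ) = 0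
      · simp [h0, hQzero σ j h0]
      · rw [hc]
        exact ENNReal.div_mul_cancel h0 (hfin σ)
    rw [Finset.sum_congr rfl fun σ _ => this σ,
      ← ENNReal.ofReal_sum_of_nonneg (fun σ _ => hQnn σ _), hQcol j]
  have hsum : (∑ j, ρ j) = ν := by
    rw [hρ]
    rw [Finset.sum_comm]
    have : ∀ σ, (∑ j, (c σ j) • ν.restrict (Cell y ψ σ)) = ν.restrict (Cell y ψ σ) := by
      intro σ
      rw [← Finset.sum_smul]
      by_cases h0 : ν (Cell y ψ σ) = 0
      · rw [Measure.restrict_eq_zero.mpr h0]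
        simp
      · have : (∑ j, c σ j) = 1 := by
          rw [hc]
          simp only
          simp only [div_eq_mul_inv]
          rw [← Finset.sum_mul, ← ENNReal.ofReal_sum_of_nonneg (fun i _ => hQnn σ _), hQrow σ,
            ENNReal.ofReal_toReal (hfin σ)]
          rw [← div_eq_mul_inv]
          exact ENNReal.div_self h0 (hfin σ)
        rw [this, one_smul]
    rw [Finset.sum_congr rfl fun σ _ => this σ]
    exact sum_restrict_cell y ψ ν
  have hconc : ∀ j, ρ j ((Lag y ψ j)ᶜ) = 0 := by
    intro j
    rw [hρ]
    simp only [Measure.coe_finset_sum, Finset.sum_apply, Measure.smul_apply, smul_eq_mul]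
    refine Finset.sum_eq_zero fun σ _ => ?_
    by_cases hQ0 : Q σ j = 0
    · simp [hc, hQ0]
    · have hσj : σ j = true := by
        rcases Bool.eq_false_or_eq_true (σ j) with h1 | h1
        · exact h1
        · exact absurd (hQsupp σ j h1) hQ0
      have hsub : Cell y ψ σ ⊆ Lag y ψ j := cell_subset_lag y ψ hσj
      rw [Measure.restrict_apply (lag_meas y ψ j).compl]
      have : (Lag y ψ j)ᶜ ∩ Cell y ψ σ = ∅ := by
        rw [Set.eq_empty_iff_forall_notMem]
        rintro x ⟨hx1, hx2⟩
        exact hx1 (hsub hx2)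
      rw [this]
      simp
  haveI hρfin : ∀ j, IsFiniteMeasure (ρ j) := by
    intro j
    constructor
    rw [hmass j]
    exact ENNReal.ofReal_lt_top
  set π₀ : Measure (X × X) := ∑ j, (ρ j).map (fun x => (x, y j)) with hπ₀
  have hmeas_emb : ∀ j, Measurable (fun x : X => (x, y j)) :=
    fun j => measurable_id.prodMk measurable_const
  have hcoupling : IsCoupling π₀ ν μ := by
    constructor
    · rw [hπ₀, map_finset_sum_meas _ _ measurable_fst]
      rw [Finset.sum_congr rfl fun j _ => Measure.map_map measurable_fst (hmeas_emb j)]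
      have : ∀ j, (Prod.fst ∘ fun x : X => (x, y j)) = id := fun j => rfl
      rw [Finset.sum_congr rfl fun j _ => by rw [this j, Measure.map_id]]
      exact hsum
    · rw [hπ₀, map_finset_sum_meas _ _ measurable_snd]
      rw [Finset.sum_congr rfl fun j _ => Measure.map_map measurable_snd (hmeas_emb j)]
      have : ∀ j, (Prod.snd ∘ fun x : X => (x, y j)) = (fun _ => y j) := fun j => rfl
      rw [Finset.sum_congr rfl fun j _ => by rw [this j, Measure.map_const, hmass j], hμ]
  refine ⟨π₀, hcoupling, ?_⟩
  haveI : ∀ j, IsFiniteMeasure ((ρ j).map (fun x => (x, y j))) := by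
    intro j
    constructor
    rw [Measure.map_apply (hmeas_emb j) MeasurableSet.univ]
    exact lt_of_le_of_lt (measure_mono (Set.subset_univ _)) (measure_lt_top _ _)
  rw [hπ₀, integral_finset_sum_measure (fun j _ => cost_integrable _)]
  have hint : ∀ j, ∫ p : X × X, dist p.1 p.2 ^ 2 ∂((ρ j).map (fun x => (x, y j)))
      = ∫ x, dist x (y j) ^ 2 ∂(ρ j) := by
    intro j
    rw [integral_map (hmeas_emb j).aemeasurable]
    exact ((continuous_fst.dist continuous_snd).pow 2).aestronglyMeasurable
  rw [Finset.sum_congr rfl fun j _ => hint j]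
  have hae : ∀ j, ∀ᵐ x ∂(ρ j), x ∈ Lag y ψ j := by
    intro j
    rw [ae_iff]
    exact hconc j
  have hcongr : ∀ j, ∫ x, dist x (y j) ^ 2 ∂(ρ j) = ∫ x, (psiC y ψ x + ψ j) ∂(ρ j) := by
    intro j
    refine integral_congr_ae ((hae j).mono fun x hx => ?_)
    show dist x (y j) ^ 2 = psiC y ψ x + ψ j
    rw [psiC_eq y ψ hn x j hx]
    ring
  rw [Finset.sum_congr rfl fun j _ => hcongr j]
  have hsplit : ∀ j, ∫ x, (psiC y ψ x + ψ j) ∂(ρ j)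
      = (∫ x, psiC y ψ x ∂(ρ j)) + α j * ψ j := by
    intro j
    rw [integral_add (psiC_integrable y ψ hn (ρ j)) (integrable_const _), integral_const,
      measureReal_def, hmass j, smul_eq_mul, ENNReal.toReal_ofReal (hα j).le]
  rw [Finset.sum_congr rfl fun j _ => hsplit j, Finset.sum_add_distrib]
  rw [dualFun, ← integral_finset_sum_measure (fun j _ => psiC_integrable y ψ hn (ρ j)), hsum]

end StepC

section StepD
open Classical
variable {X : Type*} [MetricSpace X] [CompactSpace X] [MeasurableSpace X] [BorelSpace X]
  {n : ℕ} (y : Fin n → X) (ψ : Fin n → ℝ)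

/-- Extension of `ψ` to `X` through the points `y j`. -/
noncomputable def Psi (z : X) : ℝ := ∑ j, Set.indicator {y j} (fun _ => ψ j) z

lemma Psi_apply (hy : Function.Injective y) (i : Fin n) : Psi y ψ (y i) = ψ i := by
  rw [Psi, Finset.sum_eq_single i]
  · simp
  · intro j _ hj
    refine Set.indicator_of_notMem (fun h => ?_) _
    rw [Set.mem_singleton_iff] at h
    exact hj (hy h.symm)
  · simp

lemma Psi_meas : Measurable (Psi y ψ) :=
  Finset.measurable_sum _ fun j _ =>
    measurable_const.indicator (measurableSet_singleton (y j))

lemma Psi_abs_le (z : X) : |Psi y ψ z| ≤ ∑ j, |ψ j| := by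
  refine (Finset.abs_sum_le_sum_abs _ _).trans (Finset.sum_le_sum fun j _ => ?_)
  rcases Set.indicator_eq_zero_or_self {y j} (fun _ => ψ j) z with h | h <;> rw [h] <;> simp

lemma Psi_integrable (m : Measure X) [IsFiniteMeasure m] : Integrable (Psi y ψ) m := by
  refine Integrable.mono' (integrable_const (∑ j, |ψ j|))
    (Psi_meas y ψ).aestronglyMeasurable ?_
  exact Filter.Eventually.of_forall fun z => by
    rw [Real.norm_eq_abs]; exact Psi_abs_le y ψ z

lemma range_meas : MeasurableSet (Set.range y) :=
  (Set.finite_range y).measurableSet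

lemma coupling_snd_range (μ ν : Measure X) (α : Fin n → ℝ)
    (hμ : μ = ∑ j, ENNReal.ofReal (α j) • Measure.dirac (y j))
    (π' : Measure (X × X)) (hc : IsCoupling π' ν μ) :
    π' ({p : X × X | p.2 ∈ Set.range y}ᶜ) = 0 := by
  have : ({p : X × X | p.2 ∈ Set.range y}ᶜ) = Prod.snd ⁻¹' ((Set.range y)ᶜ) := rfl
  rw [this, ← Measure.map_apply measurable_snd (range_meas y).compl, hc.2, hμ]
  simp only [Measure.coe_finset_sum, Finset.sum_apply, Measure.smul_apply, smul_eq_mul]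
  refine Finset.sum_eq_zero fun j _ => ?_
  rw [Measure.dirac_apply' _ (range_meas y).compl]
  simp [Set.indicator_of_notMem, Set.mem_range_self j]

lemma measure_univ_of_coupling (μ ν : Measure X) (α : Fin n → ℝ) (hα : ∀ j, 0 < α j)
    (hsum : ∑ j, α j = 1)
    (hμ : μ = ∑ j, ENNReal.ofReal (α j) • Measure.dirac (y j))
    (π' : Measure (X × X)) (hc : IsCoupling π' ν μ) :
    IsProbabilityMeasure π' := by
  constructor
  have h1 : π' Set.univ = μ Set.univ := by
    rw [← hc.2, Measure.map_apply measurable_snd MeasurableSet.univ]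
    rfl
  rw [h1, hμ]
  simp only [Measure.coe_finset_sum, Finset.sum_apply, Measure.smul_apply, smul_eq_mul,
    measure_univ, mul_one]
  rw [← ENNReal.ofReal_sum_of_nonneg (fun j _ => (hα j).le), hsum, ENNReal.ofReal_one]

lemma weak_duality (hn : 0 < n) (hy : Function.Injective y)
    (ν : Measure X) [IsProbabilityMeasure ν]
    (α : Fin n → ℝ) (hα : ∀ j, 0 < α j) (hsum : ∑ j, α j = 1)
    (μ : Measure X) (hμ : μ = ∑ j, ENNReal.ofReal (α j) • Measure.dirac (y j))
    (π' : Measure (X × X)) (hc : IsCoupling π' ν μ) :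
    dualFun y α ν ψ ≤ ∫ p : X × X, dist p.1 p.2 ^ 2 ∂π' := by
  haveI := measure_univ_of_coupling y μ ν α hα hsum hμ π' hc
  have h_ae : ∀ᵐ p ∂π', psiC y ψ p.1 + Psi y ψ p.2 ≤ dist p.1 p.2 ^ 2 := by
    have h0 : ∀ᵐ p ∂π', p.2 ∈ Set.range y := by
      rw [ae_iff]
      exact coupling_snd_range y μ ν α hμ π' hc
    filter_upwards [h0] with p hp
    obtain ⟨i, hi⟩ := hp
    rw [← hi, Psi_apply y ψ hy i]
    have := psiC_le y ψ hn p.1 i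
    linarith
  have hint1 : Integrable (fun p : X × X => psiC y ψ p.1 + Psi y ψ p.2) π' := by
    refine Integrable.add ?_ ?_
    · exact ((psiC_cont y ψ hn).comp continuous_fst).integrable_of_hasCompactSupport
        (HasCompactSupport.of_compactSpace _)
    · refine Integrable.mono' (integrable_const (∑ j, |ψ j|))
        ((Psi_meas y ψ).comp measurable_snd).aestronglyMeasurable ?_
      exact Filter.Eventually.of_forall fun p => by
        rw [Real.norm_eq_abs]; exact Psi_abs_le y ψ p.2
  have step := integral_mono_ae hint1 (cost_integrable π') h_ae
  have hA : Integrable (fun p : X × X => psiC y ψ p.1) π' :=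
    ((psiC_cont y ψ hn).comp continuous_fst).integrable_of_hasCompactSupport
      (HasCompactSupport.of_compactSpace _)
  have hB : Integrable (fun p : X × X => Psi y ψ p.2) π' :=
    Integrable.mono' (integrable_const (∑ j, |ψ j|))
      ((Psi_meas y ψ).comp measurable_snd).aestronglyMeasurable
      (Filter.Eventually.of_forall fun p => by
        rw [Real.norm_eq_abs]; exact Psi_abs_le y ψ p.2)
  refine le_trans (le_of_eq ?_) step
  rw [integral_add hA hB, dualFun]
  congr 1
  · rw [← hc.1, integral_map measurable_fst.aemeasurable
      ((psiC_cont y ψ hn).aestronglyMeasurable)]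
  · have h2 : ∫ p : X × X, Psi y ψ p.2 ∂π' = ∫ z, Psi y ψ z ∂μ := by
      rw [← hc.2, integral_map measurable_snd.aemeasurable
        (Psi_meas y ψ).aestronglyMeasurable]
    rw [h2, hμ]
    rw [integral_finset_sum_measure (fun j _ => ?_)]
    · refine Finset.sum_congr rfl fun j _ => ?_
      rw [integral_smul_measure, integral_dirac' _ _ (Psi_meas y ψ).stronglyMeasurable,
        Psi_apply y ψ hy j, ENNReal.toReal_ofReal (hα j).le, smul_eq_mul]
    · haveI : IsFiniteMeasure ((ENNReal.ofReal (α j)) • Measure.dirac (y j)) := by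
        constructor
        simp only [Measure.smul_apply, smul_eq_mul]
        exact ENNReal.mul_lt_top ENNReal.ofReal_lt_top (measure_lt_top _ _)
      exact Psi_integrable y ψ _

end StepD

section Final
open Classical
variable {X : Type*} [MetricSpace X] [CompactSpace X] [MeasurableSpace X] [BorelSpace X]
  {n : ℕ} (y : Fin n → X) (ψ : Fin n → ℝ)

lemma mem_tie (i j : Fin n) (hij : i ≠ j) {x : X}
    (hxj : x ∈ Lag y ψ j) (hxi : x ∈ Lag y ψ i) : x ∈ TieSet y ψ j := by
  rw [TieSet]
  exact Set.mem_biUnion hij ⟨hxj, hxi⟩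

lemma not_in_other_lag {i j : Fin n} (hij : i ≠ j) {x : X}
    (hx : x ∈ Lag y ψ j \ TieSet y ψ j) (hxi : x ∈ Lag y ψ i) : False :=
  hx.2 (mem_tie y ψ i j hij hx.1 hxi)

lemma interior_not_tie {j : Fin n} {x : X}
    (hx : x ∈ Lag y ψ j \ TieSet y ψ j) (hxt : x ∈ ⋃ i, TieSet y ψ i) : False := by
  obtain ⟨i, hi⟩ := Set.mem_iUnion.mp hxt
  rw [TieSet] at hi
  obtain ⟨k, hk, hxik⟩ := Set.mem_iUnion₂.mp hi
  rcases eq_or_ne i j with rfl | hij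
  · exact hx.2 hi
  · exact not_in_other_lag y ψ hij hx hxik.1

lemma integral_dual_split (hn : 0 < n) (hy : Function.Injective y)
    (ν : Measure X) [IsProbabilityMeasure ν]
    (α : Fin n → ℝ) (hα : ∀ j, 0 < α j) (hsum : ∑ j, α j = 1)
    (μ : Measure X) (hμ : μ = ∑ j, ENNReal.ofReal (α j) • Measure.dirac (y j))
    (π' : Measure (X × X)) (hc : IsCoupling π' ν μ) :
    ∫ p : X × X, (psiC y ψ p.1 + Psi y ψ p.2) ∂π' = dualFun y α ν ψ := by
  haveI := measure_univ_of_coupling y μ ν α hα hsum hμ π' hc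
  have hA : Integrable (fun p : X × X => psiC y ψ p.1) π' :=
    ((psiC_cont y ψ hn).comp continuous_fst).integrable_of_hasCompactSupport
      (HasCompactSupport.of_compactSpace _)
  have hB : Integrable (fun p : X × X => Psi y ψ p.2) π' :=
    Integrable.mono' (integrable_const (∑ j, |ψ j|))
      ((Psi_meas y ψ).comp measurable_snd).aestronglyMeasurable
      (Filter.Eventually.of_forall fun p => by
        rw [Real.norm_eq_abs]; exact Psi_abs_le y ψ p.2)
  rw [integral_add hA hB, dualFun]
  congr 1
  · rw [← hc.1, integral_map measurable_fst.aemeasurable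
      ((psiC_cont y ψ hn).aestronglyMeasurable)]
  · have h2 : ∫ p : X × X, Psi y ψ p.2 ∂π' = ∫ z, Psi y ψ z ∂μ := by
      rw [← hc.2, integral_map measurable_snd.aemeasurable
        (Psi_meas y ψ).aestronglyMeasurable]
    rw [h2, hμ]
    rw [integral_finset_sum_measure (fun j _ => ?_)]
    · refine Finset.sum_congr rfl fun j _ => ?_
      rw [integral_smul_measure, integral_dirac' _ _ (Psi_meas y ψ).stronglyMeasurable,
        Psi_apply y ψ hy j, ENNReal.toReal_ofReal (hα j).le, smul_eq_mul]
    · haveI : IsFiniteMeasure ((ENNReal.ofReal (α j)) • Measure.dirac (y j)) := by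
        constructor
        simp only [Measure.smul_apply, smul_eq_mul]
        exact ENNReal.mul_lt_top ENNReal.ofReal_lt_top (measure_lt_top _ _)
      exact Psi_integrable y ψ _


end Final

/-- Structure of the squared Wasserstein distance to an atomic measure: it splits
into the costs over the interiors of the Laguerre cells plus the cost over the
tie set. -/
theorem stmt6 {X : Type*} [MetricSpace X] [CompactSpace X]
    [MeasurableSpace X] [BorelSpace X]
    (n : ℕ) (hn : 0 < n) (y : Fin n → X) (hy : Function.Injective y)
    (α : Fin n → ℝ) (hα : ∀ j, 0 < α j) (hsum : ∑ j, α j = 1)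
    (ν : Measure X) [IsProbabilityMeasure ν]
    (μ : Measure X) (hμ : μ = ∑ j, ENNReal.ofReal (α j) • Measure.dirac (y j))
    (ψ : Fin n → ℝ) (hmax : ∀ φ : Fin n → ℝ, dualFun y α ν φ ≤ dualFun y α ν ψ)
    (π : Measure (X × X)) (hopt : IsOptimalCoupling π ν μ) :
    W2sq ν μ =
      (∑ j, ∫ x in Lag y ψ j \ TieSet y ψ j, dist x (y j) ^ 2 ∂ν) +
        ∫ p in (⋃ j, TieSet y ψ j) ×ˢ Set.range y, dist p.1 p.2 ^ 2 ∂π := by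

  obtain ⟨hcpl, hmin⟩ := hopt
  haveI hπprob : IsProbabilityMeasure π :=
    measure_univ_of_coupling y μ ν α hα hsum hμ π hcpl
  -- the value of the optimal cost is the dual value
  obtain ⟨π₀, hπ₀c, hπ₀cost⟩ := stepC y ψ hn ν α hα μ hμ hmax
  have hcost_dual : ∫ p : X × X, dist p.1 p.2 ^ 2 ∂π = dualFun y α ν ψ :=
    le_antisymm (hπ₀cost ▸ hmin π₀ hπ₀c)
      (weak_duality y ψ hn hy ν α hα hsum μ hμ π hcpl)
  -- W2sq equals the cost of the optimal coupling
  have hW2 : W2sq ν μ = ∫ p : X × X, dist p.1 p.2 ^ 2 ∂π := by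
    refine IsLeast.csInf_eq ⟨⟨π, hcpl, rfl⟩, ?_⟩
    rintro r ⟨π', hπ', rfl⟩
    exact hmin π' hπ'
  -- concentration of π on the graph of the Laguerre diagram
  have h_range : ∀ᵐ p ∂π, p.2 ∈ Set.range y := by
    rw [ae_iff]
    exact coupling_snd_range y μ ν α hμ π hcpl
  have hG_nonneg : 0 ≤ᵐ[π] fun p : X × X =>
      dist p.1 p.2 ^ 2 - (psiC y ψ p.1 + Psi y ψ p.2) := by
    filter_upwards [h_range] with p hp
    obtain ⟨i, hi⟩ := hp
    simp only [Pi.zero_apply]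
    rw [← hi, Psi_apply y ψ hy i]
    have := psiC_le y ψ hn p.1 i
    linarith
  have hAB : Integrable (fun p : X × X => psiC y ψ p.1 + Psi y ψ p.2) π := by
    refine Integrable.add ?_ ?_
    · exact ((psiC_cont y ψ hn).comp continuous_fst).integrable_of_hasCompactSupport
        (HasCompactSupport.of_compactSpace _)
    · exact Integrable.mono' (integrable_const (∑ j, |ψ j|))
        ((Psi_meas y ψ).comp measurable_snd).aestronglyMeasurable
        (Filter.Eventually.of_forall fun p => by
          rw [Real.norm_eq_abs]; exact Psi_abs_le y ψ p.2)
  have hG_int : Integrable (fun p : X × X =>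
      dist p.1 p.2 ^ 2 - (psiC y ψ p.1 + Psi y ψ p.2)) π :=
    (cost_integrable π).sub hAB
  have hG_zero : ∫ p : X × X,
      (dist p.1 p.2 ^ 2 - (psiC y ψ p.1 + Psi y ψ p.2)) ∂π = 0 := by
    rw [integral_sub (cost_integrable π) hAB, hcost_dual,
      integral_dual_split y ψ hn hy ν α hα hsum μ hμ π hcpl, sub_self]
  have hG_ae : ∀ᵐ p ∂π, dist p.1 p.2 ^ 2 - (psiC y ψ p.1 + Psi y ψ p.2) = 0 := by
    have := (integral_eq_zero_iff_of_nonneg_ae hG_nonneg hG_int).mp hG_zero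
    filter_upwards [this] with p hp
    exact hp
  have h_conc : ∀ᵐ p ∂π, ∃ i, p.1 ∈ Lag y ψ i ∧ p.2 = y i := by
    filter_upwards [hG_ae, h_range] with p hG hp
    obtain ⟨i, hi⟩ := hp
    refine ⟨i, ?_, hi.symm⟩
    rw [← hi, Psi_apply y ψ hy i] at hG
    refine mem_lag_of_le y ψ hn p.1 i (le_of_eq ?_)
    linarith
  -- split the integral
  set S1 : Fin n → Set (X × X) := fun j => (Lag y ψ j \ TieSet y ψ j) ×ˢ Set.univ with hS1
  set R : Set (X × X) := (⋃ j, TieSet y ψ j) ×ˢ Set.range y with hR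
  have hS1meas : ∀ j, MeasurableSet (S1 j) :=
    fun j => ((lag_meas y ψ j).diff (tie_meas y ψ j)).prod MeasurableSet.univ
  have hRmeas : MeasurableSet R :=
    (MeasurableSet.iUnion fun j => tie_meas y ψ j).prod (range_meas y)
  set U : Set (X × X) := (⋃ j, S1 j) ∪ R with hU
  have h_cover : ∀ᵐ p ∂π, p ∈ U := by
    filter_upwards [h_conc] with p hp
    obtain ⟨i, hLag, hp2⟩ := hp
    by_cases ht : p.1 ∈ ⋃ j, TieSet y ψ j
    · exact Or.inr ⟨ht, hp2 ▸ Set.mem_range_self i⟩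
    · refine Or.inl (Set.mem_iUnion.mpr ⟨i, ?_⟩)
      exact ⟨⟨hLag, fun hTie => ht (Set.mem_iUnion.mpr ⟨i, hTie⟩)⟩, Set.mem_univ _⟩
  have h_restrict : π.restrict U = π := Measure.restrict_eq_self_of_ae_mem h_cover
  have hsplit : ∫ p : X × X, dist p.1 p.2 ^ 2 ∂π
      = (∑ j, ∫ p in S1 j, dist p.1 p.2 ^ 2 ∂π) + ∫ p in R, dist p.1 p.2 ^ 2 ∂π := by
    conv_lhs => rw [← h_restrict]
    have hdisj : Disjoint (⋃ j, S1 j) R := by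
      rw [Set.disjoint_left]
      rintro p hp1 hp2
      obtain ⟨j, hj⟩ := Set.mem_iUnion.mp hp1
      exact interior_not_tie y ψ hj.1 hp2.1
    have : (∫ p in (⋃ j, S1 j) ∪ R, dist p.1 p.2 ^ 2 ∂π)
        = (∫ p in ⋃ j, S1 j, dist p.1 p.2 ^ 2 ∂π) + ∫ p in R, dist p.1 p.2 ^ 2 ∂π :=
      setIntegral_union hdisj hRmeas ((cost_integrable π).integrableOn)
        ((cost_integrable π).integrableOn)
    rw [hU, this]
    congr 1
    have hte : (⋃ j, S1 j) = ⋃ j ∈ (Finset.univ : Finset (Fin n)), S1 j := by simp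
    rw [hte, integral_biUnion_finset Finset.univ (fun j _ => hS1meas j) ?hpd
      (fun j _ => (cost_integrable π).integrableOn)]
    case hpd =>
      intro i _ j _ hij
      simp only [Function.onFun, Set.disjoint_left]
      rintro p hpi hpj
      exact not_in_other_lag y ψ hij hpj.1 hpi.1.1
  rw [hW2, hsplit]
  congr 1
  refine Finset.sum_congr rfl fun j _ => ?_
  -- on S1 j, the second coordinate is a.e. y j
  have hae_eq : ∫ p in S1 j, dist p.1 p.2 ^ 2 ∂π
      = ∫ p in S1 j, dist p.1 (y j) ^ 2 ∂π := by
    refine integral_congr_ae ?_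
    have : ∀ᵐ p ∂π, p ∈ S1 j → dist p.1 p.2 ^ 2 = dist p.1 (y j) ^ 2 := by
      filter_upwards [h_conc] with p hp hpS
      obtain ⟨i, hLag, hp2⟩ := hp
      rcases eq_or_ne i j with rfl | hij
      · rw [hp2]
      · exact absurd hLag (fun h => not_in_other_lag y ψ hij hpS.1 h)
    exact (ae_restrict_iff' (hS1meas j)).mpr this
  rw [hae_eq]
  have hproj : S1 j = Prod.fst ⁻¹' (Lag y ψ j \ TieSet y ψ j) := by
    ext p; simp [hS1, Set.mem_prod]
  rw [hproj]
  have hkey : ∫ x in Lag y ψ j \ TieSet y ψ j, dist x (y j) ^ 2 ∂ν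
      = ∫ p : X × X in Prod.fst ⁻¹' (Lag y ψ j \ TieSet y ψ j), dist p.1 (y j) ^ 2 ∂π := by
    have hsm : AEStronglyMeasurable (fun x : X => dist x (y j) ^ 2)
        (π.map Prod.fst) :=
      ((continuous_id.dist continuous_const).pow 2).aestronglyMeasurable
    rw [← hcpl.1, setIntegral_map ((lag_meas y ψ j).diff (tie_meas y ψ j))
      hsm measurable_fst.aemeasurable]
  rw [hkey]
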